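/- Let h ∈ ℝ. Every solution W : (0,∞) → ℝ of the ODE (1/2)W(y) − (y/2)W′(y) − W″(y) = h can be written as W(y) = −c₁ W₁(y) + c₀ W₀(y) + 2h for some constants c₀, c₁ ∈ ℝ, where W₀(y) = y and W₁(y) = y ∫_y^∞ e^{−ζ²/4} ζ^{−2} dζ. Conversely, every function of this form is a solution. In particular, {W₀, W₁} is a fundamental system of solutions of the homogeneous equation (1/2)w − (y/2)w′ − w″ = 0 on (0,∞), and the constant 2h is a particular solution of the inhomogeneous equation. -/

import Mathlib

set_option autoImplicit false
open Set Filter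

/-- The decaying solution `W₁(y) = y ∫_y^∞ e^{-ζ²/4} ζ^{-2} dζ` of the homogeneous
Hermite-type equation, defined for `y > 0`. -/
noncomputable def W1 (y : ℝ) : ℝ :=
  y * ∫ ζ in Ioi y, Real.exp (-ζ ^ 2 / 4) / ζ ^ 2

/-- `W` solves the Hermite-type ODE `(1/2)W - (y/2)W' - W'' = h` on `(0,∞)`. -/
def SolvesHermite (h : ℝ) (W : ℝ → ℝ) : Prop :=
  ∀ y : ℝ, 0 < y →
    DifferentiableAt ℝ W y ∧ DifferentiableAt ℝ (deriv W) y ∧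
    1 / 2 * W y - y / 2 * deriv W y - deriv (deriv W) y = h

open MeasureTheory intervalIntegral

noncomputable def fker (ζ : ℝ) : ℝ := Real.exp (-ζ ^ 2 / 4) / ζ ^ 2
noncomputable def Ifun (y : ℝ) : ℝ := ∫ ζ in Ioi y, fker ζ

lemma fker_contOn : ContinuousOn fker (Ioi 0) := by
  apply ContinuousOn.div
  · exact (Real.continuous_exp.comp (continuous_pow 2 |>.neg.div_const 4)).continuousOn
  · exact (continuous_pow 2).continuousOn
  · intro x hx; exact pow_ne_zero _ (ne_of_gt hx)

lemma fker_contAt {y : ℝ} (hy : 0 < y) : ContinuousAt fker y := by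
  have : ContinuousAt (fun ζ : ℝ => Real.exp (-ζ ^ 2 / 4)) y :=
    (Real.continuous_exp.comp (by continuity)).continuousAt
  exact this.div (continuous_pow 2).continuousAt (by positivity)

lemma fker_integrableOn {y : ℝ} (hy : 0 < y) : IntegrableOn fker (Ioi y) := by
  have hg : IntegrableOn (fun ζ : ℝ => Real.exp (-(1/4) * ζ ^ 2) / y ^ 2) (Ioi y) :=
    ((integrable_exp_neg_mul_sq (by norm_num : (0:ℝ) < 1/4)).div_const _).integrableOn
  refine hg.mono' (fker_contOn.mono (Ioi_subset_Ioi hy.le) |>.aestronglyMeasurable measurableSet_Ioi) ?_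
  filter_upwards [ae_restrict_mem measurableSet_Ioi] with ζ hζ
  have hζ0 : 0 < ζ := hy.trans hζ
  have h1 : fker ζ = Real.exp (-(1/4) * ζ ^ 2) / ζ ^ 2 := by unfold fker; ring_nf
  have hpos : 0 < Real.exp (-(1/4) * ζ ^ 2) / ζ ^ 2 := by positivity
  rw [Real.norm_eq_abs, h1, abs_of_nonneg hpos.le]
  gcongr
  exact hζ.le

lemma fker_intervalIntegrable {a b : ℝ} (ha : 0 < a) (hb : 0 < b) :
    IntervalIntegrable fker volume a b := by
  have hm : 0 < min a b := lt_min ha hb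
  have : IntegrableOn fker (uIcc a b) := by
    refine (fker_integrableOn (by positivity : (0:ℝ) < min a b / 2)).mono_set ?_
    intro x hx
    have := hx.1
    simp only [uIcc, mem_Icc] at hx ⊢
    have : min a b ≤ x := hx.1
    exact mem_Ioi.mpr (lt_of_lt_of_le (by linarith) this)
  exact this.intervalIntegrable

lemma Ifun_sub {a b : ℝ} (ha : 0 < a) (hb : 0 < b) :
    Ifun a - Ifun b = ∫ t in a..b, fker t := by
  have key : ∀ u v : ℝ, 0 < u → u ≤ v → Ifun u - Ifun v = ∫ t in u..v, fker t := by
    intro u v hu huv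
    have hv : 0 < v := lt_of_lt_of_le hu huv
    have hsplit : Ifun u = (∫ t in Ioc u v, fker t) + Ifun v := by
      unfold Ifun
      rw [← setIntegral_union (Ioc_disjoint_Ioi le_rfl) measurableSet_Ioi
        ((fker_integrableOn hu).mono_set Ioc_subset_Ioi_self) (fker_integrableOn hv),
        Ioc_union_Ioi_eq_Ioi huv]
    rw [hsplit, intervalIntegral.integral_of_le huv]
    ring
  rcases le_total a b with hab | hab
  · exact key a b ha hab
  · have := key b a hb hab
    rw [intervalIntegral.integral_symm]
    linarith

lemma hasDerivAt_Ifun {y : ℝ} (hy : 0 < y) : HasDerivAt Ifun (-fker y) y := by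
  set c := y / 2 with hc
  have hc0 : 0 < c := by positivity
  have hFTC : HasDerivAt (fun x => ∫ t in c..x, fker t) (fker y) y :=
    intervalIntegral.integral_hasDerivAt_right (fker_intervalIntegrable hc0 hy)
      (fker_contOn.stronglyMeasurableAtFilter isOpen_Ioi _ hy)
      (fker_contAt hy)
  have heq : Ifun =ᶠ[nhds y] fun x => Ifun c - ∫ t in c..x, fker t := by
    filter_upwards [isOpen_Ioi.mem_nhds (mem_Ioi.mpr hy)] with x hx
    have := Ifun_sub hc0 (mem_Ioi.mp hx)
    linarith
  have : HasDerivAt (fun x => Ifun c - ∫ t in c..x, fker t) (-fker y) y :=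
    (hasDerivAt_const y (Ifun c)).sub hFTC |>.congr_deriv (by ring)
  exact this.congr_of_eventuallyEq heq

lemma W1_eq (y : ℝ) : W1 y = y * Ifun y := rfl

noncomputable def gfun (y : ℝ) : ℝ := Ifun y - Real.exp (-y ^ 2 / 4) / y

lemma hasDerivAt_W1 {y : ℝ} (hy : 0 < y) : HasDerivAt W1 (gfun y) y := by
  have h := (hasDerivAt_id y).mul (hasDerivAt_Ifun hy)
  have : HasDerivAt (fun x => x * Ifun x) (gfun y) y := by
    refine h.congr_deriv ?_
    unfold gfun fker id
    field_simp
    ring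
  exact this

lemma hasDerivAt_exp_part {y : ℝ} (hy : 0 < y) :
    HasDerivAt (fun x : ℝ => Real.exp (-x ^ 2 / 4)) (-y/2 * Real.exp (-y ^ 2 / 4)) y := by
  have h1 : HasDerivAt (fun x : ℝ => -x ^ 2 / 4) (-y/2) y := by
    have := ((hasDerivAt_pow 2 y).neg).div_const 4
    refine this.congr_deriv ?_; ring
  have := h1.exp
  convert this using 1; ring

lemma hasDerivAt_gfun {y : ℝ} (hy : 0 < y) :
    HasDerivAt gfun (Real.exp (-y ^ 2 / 4) / 2) y := by
  have h2 : HasDerivAt (fun x : ℝ => Real.exp (-x ^ 2 / 4) / x)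
      ((-y/2 * Real.exp (-y ^ 2 / 4) * y - Real.exp (-y ^ 2 / 4) * 1) / y ^ 2) y :=
    (hasDerivAt_exp_part hy).div (hasDerivAt_id y) (ne_of_gt hy)
  have h := (hasDerivAt_Ifun hy).sub h2
  refine h.congr_deriv ?_
  unfold fker
  field_simp
  ring

lemma deriv_W1_eq {y : ℝ} (hy : 0 < y) : deriv W1 y = gfun y := (hasDerivAt_W1 hy).deriv

lemma deriv_deriv_W1 {y : ℝ} (hy : 0 < y) :
    deriv (deriv W1) y = Real.exp (-y ^ 2 / 4) / 2 := by
  have heq : deriv W1 =ᶠ[nhds y] gfun := by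
    filter_upwards [isOpen_Ioi.mem_nhds (mem_Ioi.mpr hy)] with x hx
    exact deriv_W1_eq (mem_Ioi.mp hx)
  rw [Filter.EventuallyEq.deriv_eq heq]
  exact (hasDerivAt_gfun hy).deriv

lemma W1_homog {y : ℝ} (hy : 0 < y) :
    1 / 2 * W1 y - y / 2 * gfun y - Real.exp (-y ^ 2 / 4) / 2 = 0 := by
  rw [W1_eq]; unfold gfun
  field_simp
  ring

lemma const_of_hasDerivAt_zero {F : ℝ → ℝ} (hF : ∀ y : ℝ, 0 < y → HasDerivAt F 0 y) :
    ∀ y : ℝ, 0 < y → F y = F 1 := by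
  have key : ∀ u v : ℝ, 0 < u → u ≤ v → F v = F u := by
    intro u v hu huv
    have hcont : ContinuousOn F (Icc u v) := fun x hx =>
      ((hF x (lt_of_lt_of_le hu hx.1)).differentiableAt.continuousAt).continuousWithinAt
    have hderiv : ∀ x ∈ Ico u v, HasDerivWithinAt F 0 (Ici x) x := fun x hx =>
      (hF x (lt_of_lt_of_le hu hx.1)).hasDerivWithinAt
    exact constant_of_has_deriv_right_zero hcont hderiv v (right_mem_Icc.mpr huv)
  intro y hy
  rcases le_total 1 y with h1 | h1
  · exact key 1 y one_pos h1
  · exact (key y 1 hy h1).symm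

lemma solves_combo (h c₁ c₀ : ℝ) :
    SolvesHermite h (fun y => -c₁ * W1 y + c₀ * y + 2 * h) := by
  intro y hy
  have hd : HasDerivAt (fun y => -c₁ * W1 y + c₀ * y + 2 * h) (-c₁ * gfun y + c₀) y := by
    have := (((hasDerivAt_W1 hy).const_mul (-c₁)).add ((hasDerivAt_id y).const_mul c₀)).add_const (2*h)
    refine this.congr_deriv ?_
    ring
  have hderiv1 : deriv (fun y => -c₁ * W1 y + c₀ * y + 2 * h) =ᶠ[nhds y]
      fun x => -c₁ * gfun x + c₀ := by
    filter_upwards [isOpen_Ioi.mem_nhds (mem_Ioi.mpr hy)] with x hx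
    have hx0 : (0:ℝ) < x := hx
    have hdx : HasDerivAt (fun y => -c₁ * W1 y + c₀ * y + 2 * h) (-c₁ * gfun x + c₀) x := by
      have := (((hasDerivAt_W1 hx0).const_mul (-c₁)).add ((hasDerivAt_id x).const_mul c₀)).add_const (2*h)
      refine this.congr_deriv ?_
      ring
    exact hdx.deriv
  have hd2 : HasDerivAt (fun x => -c₁ * gfun x + c₀) (-c₁ * (Real.exp (-y ^ 2 / 4) / 2)) y := by
    have := ((hasDerivAt_gfun hy).const_mul (-c₁)).add_const c₀
    convert this using 1
  refine ⟨hd.differentiableAt, ?_, ?_⟩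
  · exact (hd2.congr_of_eventuallyEq hderiv1).differentiableAt
  · rw [hd.deriv, Filter.EventuallyEq.deriv_eq hderiv1, hd2.deriv]
    linear_combination (-c₁) * W1_homog hy

lemma hasDerivAt_E {y : ℝ} : HasDerivAt (fun x : ℝ => Real.exp (x ^ 2 / 4))
    (y / 2 * Real.exp (y ^ 2 / 4)) y := by
  have := ((hasDerivAt_pow 2 y).div_const 4).exp
  convert this using 1
  ring

lemma forward {h : ℝ} {W : ℝ → ℝ} (hW : SolvesHermite h W) :
    ∃ c₁ c₀ : ℝ, ∀ y : ℝ, 0 < y → W y = -c₁ * W1 y + c₀ * y + 2 * h := by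
  set a : ℝ → ℝ := fun y =>
    (deriv W y * W1 y - (W y - 2 * h) * gfun y) * Real.exp (y ^ 2 / 4) with ha_def
  set b : ℝ → ℝ := fun y =>
    ((W y - 2 * h) - y * deriv W y) * Real.exp (y ^ 2 / 4) with hb_def
  have ha0 : ∀ y : ℝ, 0 < y → HasDerivAt a 0 y := by
    intro y hy
    obtain ⟨h1, h2, h3⟩ := hW y hy
    have hODE : deriv (deriv W) y = (W y - 2 * h) / 2 - y / 2 * deriv W y := by linarith
    have he : Real.exp (-y ^ 2 / 4) = W1 y - y * gfun y := by linarith [W1_homog hy]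
    have hd : HasDerivAt a
        (((deriv (deriv W) y * W1 y + deriv W y * gfun y) -
          ((deriv W y) * gfun y + (W y - 2 * h) * (Real.exp (-y ^ 2 / 4) / 2))) *
            Real.exp (y ^ 2 / 4) +
          (deriv W y * W1 y - (W y - 2 * h) * gfun y) * (y / 2 * Real.exp (y ^ 2 / 4))) y := by
      exact ((h2.hasDerivAt.mul (hasDerivAt_W1 hy)).sub
        ((h1.hasDerivAt.sub_const (2 * h)).mul (hasDerivAt_gfun hy))).mul hasDerivAt_E
    convert hd using 1
    rw [hODE, he]
    ring
  have hb0 : ∀ y : ℝ, 0 < y → HasDerivAt b 0 y := by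
    intro y hy
    obtain ⟨h1, h2, h3⟩ := hW y hy
    have hODE : deriv (deriv W) y = (W y - 2 * h) / 2 - y / 2 * deriv W y := by linarith
    have hd : HasDerivAt b
        ((deriv W y - ((1 : ℝ) * deriv W y + y * deriv (deriv W) y)) * Real.exp (y ^ 2 / 4) +
          ((W y - 2 * h) - y * deriv W y) * (y / 2 * Real.exp (y ^ 2 / 4))) y := by
      exact ((h1.hasDerivAt.sub_const (2 * h)).sub
        ((hasDerivAt_id y).mul h2.hasDerivAt)).mul hasDerivAt_E
    convert hd using 1
    rw [hODE]
    ring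
  refine ⟨-(b 1), a 1, ?_⟩
  intro y hy
  have haY := const_of_hasDerivAt_zero ha0 y hy
  have hbY := const_of_hasDerivAt_zero hb0 y hy
  have hkey : W y = a y * y + b y * W1 y + 2 * h := by
    have he : Real.exp (-y ^ 2 / 4) = W1 y - y * gfun y := by linarith [W1_homog hy]
    have hEe : Real.exp (y ^ 2 / 4) * (W1 y - y * gfun y) = 1 := by
      rw [← he, ← Real.exp_add, show y ^ 2 / 4 + -y ^ 2 / 4 = 0 by ring, Real.exp_zero]
    simp only [ha_def, hb_def]
    linear_combination (2 * h - W y) * hEe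
  rw [hkey, ← haY, ← hbY]
  ring

lemma solves_W0 : SolvesHermite 0 (fun y : ℝ => y) := by
  intro y hy
  have h1 : deriv (fun y : ℝ => y) = fun _ => (1:ℝ) := by
    funext x; exact deriv_id x
  refine ⟨differentiableAt_id, ?_, ?_⟩
  · rw [h1]; exact differentiableAt_const 1
  · rw [h1, deriv_const]
    simp
    ring

lemma solves_W1 : SolvesHermite 0 W1 := by
  intro y hy
  refine ⟨(hasDerivAt_W1 hy).differentiableAt, ?_, ?_⟩
  · have heq : deriv W1 =ᶠ[nhds y] gfun := by
      filter_upwards [isOpen_Ioi.mem_nhds (mem_Ioi.mpr hy)] with x hx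
      exact deriv_W1_eq (mem_Ioi.mp hx)
    exact ((hasDerivAt_gfun hy).congr_of_eventuallyEq heq).differentiableAt
  · rw [deriv_W1_eq hy, deriv_deriv_W1 hy]
    exact W1_homog hy

lemma solves_const (h : ℝ) : SolvesHermite h (fun _ => 2 * h) := by
  intro y hy
  have h1 : deriv (fun _ : ℝ => 2 * h) = fun _ => (0:ℝ) := by
    funext x; exact deriv_const x (2 * h)
  refine ⟨differentiableAt_const _, ?_, ?_⟩
  · rw [h1]; exact differentiableAt_const 0
  · rw [h1, deriv_const]
    ring

lemma lin_indep (c₀ c₁ : ℝ) (H : ∀ y : ℝ, 0 < y → c₀ * y + c₁ * W1 y = 0) :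
    c₀ = 0 ∧ c₁ = 0 := by
  have key : ∀ y : ℝ, 0 < y → c₀ + c₁ * Ifun y = 0 := by
    intro y hy
    have h1 := H y hy
    rw [W1_eq] at h1
    have h2 : y * (c₀ + c₁ * Ifun y) = 0 := by linarith [h1]; 
    rcases mul_eq_zero.mp h2 with h | h
    · exact absurd h (ne_of_gt hy)
    · exact h
  have e1 := key 1 one_pos
  have e2 := key 2 two_pos
  have hpos : 0 < Ifun 1 - Ifun 2 := by
    rw [Ifun_sub one_pos two_pos]
    apply intervalIntegral.intervalIntegral_pos_of_pos_on
      (fker_intervalIntegrable one_pos two_pos) _ one_lt_two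
    intro x hx
    have : (0:ℝ) < x := lt_trans one_pos hx.1
    unfold fker
    positivity
  have hc1 : c₁ = 0 := by
    by_contra hne
    have : c₁ * (Ifun 1 - Ifun 2) = 0 := by linarith
    rcases mul_eq_zero.mp this with h | h
    · exact hne h
    · linarith
  constructor
  · rw [hc1] at e1; linarith
  · exact hc1

/-- **General solution of the Hermite-type ODE.**
Every solution of `(1/2)W - (y/2)W' - W'' = h` on `(0,∞)` has the form
`W = -c₁ W₁ + c₀ W₀ + 2h` with `W₀(y) = y`, and conversely every such function is a
solution; `{W₀, W₁}` is a fundamental system of the homogeneous equation (both solve it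
and they are linearly independent), and the constant `2h` is a particular solution. -/
theorem hermite_general_solution (h : ℝ) :
    -- every solution has the stated form
    (∀ W : ℝ → ℝ, SolvesHermite h W →
      ∃ c₁ c₀ : ℝ, ∀ y : ℝ, 0 < y → W y = -c₁ * W1 y + c₀ * y + 2 * h) ∧
    -- conversely, every function of this form is a solution
    (∀ c₁ c₀ : ℝ, SolvesHermite h (fun y => -c₁ * W1 y + c₀ * y + 2 * h)) ∧
    -- W₀ and W₁ solve the homogeneous equation
    SolvesHermite 0 (fun y => y) ∧
    SolvesHermite 0 W1 ∧
    -- linear independence of {W₀, W₁} on (0,∞)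
    (∀ c₀ c₁ : ℝ, (∀ y : ℝ, 0 < y → c₀ * y + c₁ * W1 y = 0) → c₀ = 0 ∧ c₁ = 0) ∧
    -- the constant 2h is a particular solution of the inhomogeneous equation
    SolvesHermite h (fun _ => 2 * h) :=
  ⟨fun _ hW => forward hW, fun c₁ c₀ => solves_combo h c₁ c₀, solves_W0, solves_W1,
    lin_indep, solves_const h⟩
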